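/- arXiv:2205.00992 — 2 statements merged into one kernel-verified Lean document; each statement's English description precedes it below -/
import Mathlib

section
/- Let $\rho \in [0,1)$ and $L \in \mathbb{N}$. For any $k_1, k_2 \in \mathbb{N}$ with $k_1 \geq 1$, $k_2 \geq 1$, and $\min(k_1, k_2) \leq L$, and for any $\ell_1 \in \{1,\ldots,2^{k_1}\}$ and $\ell_2 \in \{1,\ldots,2^{k_2}\}$, one has $\int_{(\ell_1-1)2^{-k_1}}^{\ell_1 2^{-k_1}} \int_{(\ell_2-1)2^{-k_2}}^{\ell_2 2^{-k_2}} f_{\rho,L}(x,y)\,dy\,dx = 2^{-k_1-k_2}$. That is, the probability assigned by $f_{\rho,L}$ to every dyadic rectangle whose resolution in at least one coordinate does not exceed $L$ equals the product of the (uniform) marginal probabilities of its sides. -/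
open Real intervalIntegral

/-- The sinusoidal dependence density on the unit square. -/
noncomputable def sinDensity (ρ : ℝ) (L : ℕ) (x y : ℝ) : ℝ :=
  1 + ρ * Real.sin (2 ^ (L + 1) * Real.pi * x) * Real.sin (2 ^ (L + 1) * Real.pi * y)

lemma cos_dyadic (L k m : ℕ) (hk : k ≤ L) :
    Real.cos (2 ^ (L + 1) * Real.pi * ((m : ℝ) * 2 ^ (-(k : ℤ)))) = 1 := by
  have h2 : (2:ℝ) ^ (L + 1) * 2 ^ (-(k : ℤ)) = 2 ^ (L - k) * 2 := by
    have h3 : (2:ℝ) ^ (L + 1) = 2 ^ (L - k) * 2 * 2 ^ k := by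
      rw [mul_assoc, ← pow_succ', ← pow_add]
      congr 1
      omega
    rw [h3, mul_assoc, ← zpow_natCast (2:ℝ) k, ← zpow_add₀ (two_ne_zero)]
    simp
  have := Real.cos_nat_mul_two_pi (m * 2 ^ (L - k))
  rw [show 2 ^ (L + 1) * Real.pi * ((m : ℝ) * 2 ^ (-(k : ℤ)))
      = ((m * 2 ^ (L - k) : ℕ) : ℝ) * (2 * Real.pi) by push_cast; linear_combination (m:ℝ) * Real.pi * h2]
  exact this

lemma sin_int_zero (L k ℓ : ℕ) (hk : k ≤ L) (hℓ : 1 ≤ ℓ) :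
    (∫ t in (((ℓ:ℝ) - 1) * 2 ^ (-(k:ℤ)))..((ℓ:ℝ) * 2 ^ (-(k:ℤ))),
      Real.sin (2 ^ (L + 1) * Real.pi * t)) = 0 := by
  set c : ℝ := 2 ^ (L + 1) * Real.pi with hc
  have hc0 : c ≠ 0 := by positivity
  have key : ∀ t : ℝ, HasDerivAt (fun u => -Real.cos (c * u) / c) (Real.sin (c * t)) t := by
    intro t
    have h1 : HasDerivAt (fun u => c * u) c t := by simpa using (hasDerivAt_id t).const_mul c
    have h2 := (Real.hasDerivAt_cos (c * t)).comp t h1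
    have h3 := (h2.neg.div_const c)
    exact h3.congr_deriv (by field_simp)
  have := intervalIntegral.integral_eq_sub_of_hasDerivAt (a := ((ℓ:ℝ) - 1) * 2 ^ (-(k:ℤ)))
    (b := (ℓ:ℝ) * 2 ^ (-(k:ℤ))) (fun t _ => key t)
    (Continuous.intervalIntegrable (by continuity) _ _)
  rw [this]
  have e1 : Real.cos (c * ((ℓ:ℝ) * 2 ^ (-(k:ℤ)))) = 1 := cos_dyadic L k ℓ hk
  have e2 : Real.cos (c * (((ℓ:ℝ) - 1) * 2 ^ (-(k:ℤ)))) = 1 := by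
    have := cos_dyadic L k (ℓ - 1) hk
    rwa [show (((ℓ - 1 : ℕ)) : ℝ) = (ℓ:ℝ) - 1 by push_cast [Nat.cast_sub hℓ]; ring] at this
  rw [e1, e2]
  ring

theorem sinDensity_dyadic_rectangle_product (ρ : ℝ) (hρ0 : 0 ≤ ρ) (hρ1 : ρ < 1) (L : ℕ)
    (k₁ k₂ : ℕ) (hk₁ : 1 ≤ k₁) (hk₂ : 1 ≤ k₂) (hmin : min k₁ k₂ ≤ L)
    (ℓ₁ ℓ₂ : ℕ) (hℓ₁1 : 1 ≤ ℓ₁) (hℓ₁2 : ℓ₁ ≤ 2 ^ k₁) (hℓ₂1 : 1 ≤ ℓ₂) (hℓ₂2 : ℓ₂ ≤ 2 ^ k₂) :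
    (∫ x in (((ℓ₁ : ℝ) - 1) * 2 ^ (-(k₁ : ℤ)))..((ℓ₁ : ℝ) * 2 ^ (-(k₁ : ℤ))),
      ∫ y in (((ℓ₂ : ℝ) - 1) * 2 ^ (-(k₂ : ℤ)))..((ℓ₂ : ℝ) * 2 ^ (-(k₂ : ℤ))),
        sinDensity ρ L x y) = 2 ^ (-(k₁ : ℤ) - (k₂ : ℤ)) := by
  set c : ℝ := 2 ^ (L + 1) * Real.pi with hc
  set a₁ : ℝ := ((ℓ₁ : ℝ) - 1) * 2 ^ (-(k₁ : ℤ)) with ha₁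
  set b₁ : ℝ := (ℓ₁ : ℝ) * 2 ^ (-(k₁ : ℤ)) with hb₁
  set a₂ : ℝ := ((ℓ₂ : ℝ) - 1) * 2 ^ (-(k₂ : ℤ)) with ha₂
  set b₂ : ℝ := (ℓ₂ : ℝ) * 2 ^ (-(k₂ : ℤ)) with hb₂
  set S₁ : ℝ := ∫ t in a₁..b₁, Real.sin (c * t) with hS₁
  set S₂ : ℝ := ∫ t in a₂..b₂, Real.sin (c * t) with hS₂
  have inner : ∀ x : ℝ, (∫ y in a₂..b₂, sinDensity ρ L x y)
      = (b₂ - a₂) + ρ * Real.sin (c * x) * S₂ := by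
    intro x
    unfold sinDensity
    rw [intervalIntegral.integral_add (intervalIntegrable_const)
      (Continuous.intervalIntegrable (by continuity) _ _),
      intervalIntegral.integral_const_mul, intervalIntegral.integral_const]
    simp [hc, hS₂, smul_eq_mul, mul_comm]
  rw [intervalIntegral.integral_congr (g := fun x => (b₂ - a₂) + ρ * Real.sin (c * x) * S₂)
    (fun x _ => inner x)]
  rw [intervalIntegral.integral_add (intervalIntegrable_const)
    (Continuous.intervalIntegrable (by continuity) _ _),
    intervalIntegral.integral_const]
  have hmul : (∫ x in a₁..b₁, ρ * Real.sin (c * x) * S₂) = ρ * S₂ * S₁ := by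
    rw [show (fun x => ρ * Real.sin (c * x) * S₂) = (fun x => (ρ * S₂) * Real.sin (c * x)) by
      funext x; ring]
    rw [intervalIntegral.integral_const_mul]
  rw [hmul]
  have hzero : S₁ * S₂ = 0 := by
    rcases min_le_iff.mp hmin with h | h
    · have : S₁ = 0 := by rw [hS₁, ha₁, hb₁]; exact sin_int_zero L k₁ ℓ₁ h hℓ₁1
      rw [this, zero_mul]
    · have : S₂ = 0 := by rw [hS₂, ha₂, hb₂]; exact sin_int_zero L k₂ ℓ₂ h hℓ₂1
      rw [this, mul_zero]
  have hd₁ : b₁ - a₁ = 2 ^ (-(k₁ : ℤ)) := by rw [hb₁, ha₁]; ring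
  have hd₂ : b₂ - a₂ = 2 ^ (-(k₂ : ℤ)) := by rw [hb₂, ha₂]; ring
  rw [hd₁, hd₂, smul_eq_mul, show ρ * S₂ * S₁ = ρ * (S₁ * S₂) by ring, hzero, mul_zero, add_zero,
    show (-(k₁:ℤ) - k₂) = (-(k₁:ℤ)) + (-(k₂:ℤ)) by ring, zpow_add₀ (two_ne_zero)]
end

section
/- Let $\rho \in (0,1)$ and $L \in \mathbb{N}$. Then $\int_0^{2^{-(L+1)}} \int_0^{2^{-(L+1)}} f_{\rho,L}(x,y)\,dy\,dx = 4^{-(L+1)} + \rho \cdot 4^{-L}\pi^{-2}$, which strictly exceeds $4^{-(L+1)} = \big(\int_0^{2^{-(L+1)}} 1\,dx\big)\big(\int_0^{2^{-(L+1)}} 1\,dy\big)$. In particular, if $(X,Y)$ has density $f_{\rho,L}$ with $\rho > 0$, then $X$ and $Y$ are not independent. -/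
open Real intervalIntegral

lemma sin_int_aux (c a : ℝ) (hc : c ≠ 0) :
    ∫ x in (0:ℝ)..a, Real.sin (c*x) = (1 - Real.cos (c*a))/c := by
  rw [intervalIntegral.integral_comp_mul_left Real.sin hc, mul_zero, integral_sin, Real.cos_zero]
  simp only [smul_eq_mul]
  field_simp

theorem sinDensity_corner_cell_exceeds_product (ρ : ℝ) (hρ0 : 0 < ρ) (hρ1 : ρ < 1) (L : ℕ) :
    (∫ x in (0:ℝ)..(2 ^ (-((L : ℤ) + 1))), ∫ y in (0:ℝ)..(2 ^ (-((L : ℤ) + 1))),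
        sinDensity ρ L x y)
      = 4 ^ (-((L : ℤ) + 1)) + ρ * 4 ^ (-(L : ℤ)) / Real.pi ^ 2 ∧
    4 ^ (-((L : ℤ) + 1)) + ρ * 4 ^ (-(L : ℤ)) / Real.pi ^ 2 > (4 : ℝ) ^ (-((L : ℤ) + 1)) := by
  have hπ := Real.pi_pos
  set a : ℝ := 2 ^ (-((L : ℤ) + 1)) with ha
  set c : ℝ := 2 ^ (L + 1) * Real.pi with hc
  have hc0 : c ≠ 0 := by positivity
  have key : a = ((2:ℝ)^(L+1))⁻¹ := by
    rw [ha, zpow_neg]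
    congr 1
  have h2pos : (0:ℝ) < 2^(L+1) := by positivity
  have hca : c * a = Real.pi := by
    rw [hc, key]; field_simp
  have hsin : ∫ x in (0:ℝ)..a, Real.sin (c*x) = 2 / c := by
    rw [sin_int_aux c a hc0, hca, Real.cos_pi]; ring
  have hinner : ∀ x : ℝ, (∫ y in (0:ℝ)..a, sinDensity ρ L x y)
      = a + ρ * Real.sin (c * x) * (2 / c) := by
    intro x
    have h1 : IntervalIntegrable (fun _ : ℝ => (1:ℝ)) MeasureTheory.volume 0 a :=
      intervalIntegrable_const
    have h2 : IntervalIntegrable (fun y : ℝ => ρ * Real.sin (c*x) * Real.sin (c*y))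
        MeasureTheory.volume 0 a := (Continuous.intervalIntegrable (by fun_prop) _ _)
    calc (∫ y in (0:ℝ)..a, sinDensity ρ L x y)
        = (∫ y in (0:ℝ)..a, (1:ℝ)) + ∫ y in (0:ℝ)..a, ρ * Real.sin (c*x) * Real.sin (c*y) := by
          rw [← intervalIntegral.integral_add h1 h2]; rfl
      _ = a + ρ * Real.sin (c*x) * (2/c) := by
          rw [intervalIntegral.integral_const, intervalIntegral.integral_const_mul, hsin]
          simp
  have houter : (∫ x in (0:ℝ)..a, ∫ y in (0:ℝ)..a, sinDensity ρ L x y)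
      = a * a + ρ * (2/c) * (2/c) := by
    simp only [hinner]
    have h1 : IntervalIntegrable (fun _ : ℝ => a) MeasureTheory.volume 0 a :=
      intervalIntegrable_const
    have h2 : IntervalIntegrable (fun x : ℝ => ρ * Real.sin (c*x) * (2/c))
        MeasureTheory.volume 0 a := (Continuous.intervalIntegrable (by fun_prop) _ _)
    rw [intervalIntegral.integral_add h1 h2, intervalIntegral.integral_const]
    have : (∫ x in (0:ℝ)..a, ρ * Real.sin (c*x) * (2/c))
        = ρ * (2/c) * ∫ x in (0:ℝ)..a, Real.sin (c*x) := by
      rw [← intervalIntegral.integral_const_mul]; congr 1; ext x; ring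
    rw [this, hsin]
    simp
  have haa : a * a = (4:ℝ) ^ (-((L : ℤ) + 1)) := by
    rw [ha, ← zpow_add₀ (two_ne_zero), show (4:ℝ) = (2:ℝ)^(2:ℤ) by norm_num, ← zpow_mul]
    congr 1
    ring
  have hcc : ρ * (2/c) * (2/c) = ρ * 4 ^ (-(L : ℤ)) / Real.pi ^ 2 := by
    have h2 : ((2:ℝ)^(L+1))^2 = 4^(L+1) := by
      rw [← pow_mul, show (4:ℝ) = 2^2 by norm_num, ← pow_mul]; ring_nf
    have h4 : (4:ℝ) ^ (-(L:ℤ)) = 4 / 4^(L+1) := by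
      rw [zpow_neg, zpow_natCast, pow_succ]
      field_simp
    rw [hc, h4]
    have hπne : Real.pi ≠ 0 := hπ.ne'
    field_simp
    rw [← h2]
    ring
  constructor
  · rw [houter, haa, hcc]
  · have : 0 < ρ * 4 ^ (-(L : ℤ)) / Real.pi ^ 2 := by positivity
    linarith
end
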